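/- Let S be a finite set, let R be a non-empty subset of S, and let K be a positive real number. Suppose: (a) for every z ∈ R there is a family (C_z^1, C_z^2, …, C_z^{n_z}) with n_z ≥ 3 of pairwise disjoint non-empty subsets of S, none of which contains z, and each satisfying |C_z^i| ≥ K; and (b) for all z, z' ∈ R, writing C_z = ∪_{i=1}^{n_z} C_z^i, at least one of the following holds: (i) ({z} ∪ C_z) ∩ ({z'} ∪ C_{z'}) = ∅; (ii) there exist i ∈ {1,…,n_z} and j ∈ {1,…,n_{z'}} such that ({z'} ∪ C_{z'}) \ C_{z'}^j ⊆ C_z^i and ({z} ∪ C_z) \ C_z^i ⊆ C_{z'}^j; (iii) there exists i ∈ {1,…,n_z} such that {z'} ∪ C_{z'} ⊆ C_z^i; (iv) there exists j ∈ {1,…,n_{z'}} such that {z} ∪ C_z ⊆ C_{z'}^j. Then |S| ≥ K(|R| + 2). -/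

import Mathlib

open Finset

section GKNAux
variable {α : Type*} [DecidableEq α]


private lemma piece_subset_cone {n : α → ℕ} {C : α → ℕ → Finset α} {z : α} {i : ℕ}
    (hi : i ∈ Finset.Icc 1 (n z)) :
    C z i ⊆ insert z ((Finset.Icc 1 (n z)).biUnion (C z)) :=
  (Finset.subset_biUnion_of_mem (C z) hi).trans (Finset.subset_insert _ _)

omit [DecidableEq α] in
private lemma index_eq {n : α → ℕ} {C : α → ℕ → Finset α} {z : α}
    (hdisj : ∀ i ∈ Finset.Icc 1 (n z), ∀ j ∈ Finset.Icc 1 (n z), i ≠ j → Disjoint (C z i) (C z j))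
    {i j : ℕ} (hi : i ∈ Finset.Icc 1 (n z)) (hj : j ∈ Finset.Icc 1 (n z))
    {x : α} (hxi : x ∈ C z i) (hxj : x ∈ C z j) : i = j := by
  by_contra h
  exact Finset.disjoint_left.mp (hdisj i hi j hj h) hxi hxj

private lemma atMostOneBad' {n : α → ℕ} {C : α → ℕ → Finset α} {R : Finset α}
    (hnotmem : ∀ z ∈ R, ∀ i ∈ Finset.Icc 1 (n z), z ∉ C z i)
    (hdisj : ∀ z ∈ R, ∀ i ∈ Finset.Icc 1 (n z), ∀ j ∈ Finset.Icc 1 (n z), i ≠ j →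
      Disjoint (C z i) (C z j))
    (hcases : ∀ z ∈ R, ∀ z' ∈ R, z ≠ z' →
      Disjoint (insert z ((Finset.Icc 1 (n z)).biUnion (C z)))
               (insert z' ((Finset.Icc 1 (n z')).biUnion (C z'))) ∨
      (∃ i ∈ Finset.Icc 1 (n z), ∃ j ∈ Finset.Icc 1 (n z'),
        insert z' ((Finset.Icc 1 (n z')).biUnion (C z')) \ C z' j ⊆ C z i ∧
        insert z ((Finset.Icc 1 (n z)).biUnion (C z)) \ C z i ⊆ C z' j) ∨
      (∃ i ∈ Finset.Icc 1 (n z),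
        insert z' ((Finset.Icc 1 (n z')).biUnion (C z')) ⊆ C z i) ∨
      (∃ j ∈ Finset.Icc 1 (n z'),
        insert z ((Finset.Icc 1 (n z)).biUnion (C z)) ⊆ C z' j))
    {z₀ w u : α} (hw : w ∈ R) (hu : u ∈ R) (hwz : w ≠ z₀) (huz : u ≠ z₀) (hwu : w ≠ u)
    {p q : ℕ} (hp : p ∈ Finset.Icc 1 (n w)) (hq : q ∈ Finset.Icc 1 (n u))
    (hz₀p : z₀ ∈ C w p) (hz₀q : z₀ ∈ C u q)
    (hpure : ∀ c ∈ R, c ∈ C w p → c = z₀) (hpure' : ∀ c ∈ R, c ∈ C u q → c = z₀) :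
    False := by
  rcases hcases w hw u hu hwu with h | ⟨a, ha, b, hb, h1, h2⟩ | ⟨a, ha, h⟩ | ⟨b, hb, h⟩
  · exact Finset.disjoint_left.mp h (piece_subset_cone hp hz₀p) (piece_subset_cone hq hz₀q)
  · by_cases hpa : p = a
    · have hua : u ∈ C w a :=
        h1 (Finset.mem_sdiff.mpr ⟨Finset.mem_insert_self _ _, hnotmem u hu b hb⟩)
      exact huz (hpure u hu (hpa ▸ hua))
    · have hz₀b : z₀ ∈ C u b := h2 (Finset.mem_sdiff.mpr ⟨piece_subset_cone hp hz₀p,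
        Finset.disjoint_left.mp (hdisj w hw p hp a ha hpa) hz₀p⟩)
      have hbq : b = q := index_eq (hdisj u hu) hb hq hz₀b hz₀q
      have hwb : w ∈ C u b :=
        h2 (Finset.mem_sdiff.mpr ⟨Finset.mem_insert_self _ _, hnotmem w hw a ha⟩)
      exact hwz (hpure' w hw (hbq ▸ hwb))
  · have hz₀a : z₀ ∈ C w a := h (piece_subset_cone hq hz₀q)
    have hap : a = p := index_eq (hdisj w hw) ha hp hz₀a hz₀p
    exact huz (hpure u hu (hap ▸ h (Finset.mem_insert_self _ _)))
  · have hz₀b : z₀ ∈ C u b := h (piece_subset_cone hp hz₀p)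
    have hbq : b = q := index_eq (hdisj u hu) hb hq hz₀b hz₀q
    exact hwz (hpure' w hw (hbq ▸ h (Finset.mem_insert_self _ _)))

private lemma freeCount (n : α → ℕ) (C : α → ℕ → Finset α) (R : Finset α) :
    R.Nonempty →
    (∀ z ∈ R, 3 ≤ n z) →
    (∀ z ∈ R, ∀ i ∈ Finset.Icc 1 (n z), z ∉ C z i) →
    (∀ z ∈ R, ∀ i ∈ Finset.Icc 1 (n z), ∀ j ∈ Finset.Icc 1 (n z), i ≠ j →
      Disjoint (C z i) (C z j)) →
    (∀ z ∈ R, ∀ z' ∈ R, z ≠ z' →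
      Disjoint (insert z ((Finset.Icc 1 (n z)).biUnion (C z)))
               (insert z' ((Finset.Icc 1 (n z')).biUnion (C z'))) ∨
      (∃ i ∈ Finset.Icc 1 (n z), ∃ j ∈ Finset.Icc 1 (n z'),
        insert z' ((Finset.Icc 1 (n z')).biUnion (C z')) \ C z' j ⊆ C z i ∧
        insert z ((Finset.Icc 1 (n z)).biUnion (C z)) \ C z i ⊆ C z' j) ∨
      (∃ i ∈ Finset.Icc 1 (n z),
        insert z' ((Finset.Icc 1 (n z')).biUnion (C z')) ⊆ C z i) ∨
      (∃ j ∈ Finset.Icc 1 (n z'),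
        insert z ((Finset.Icc 1 (n z)).biUnion (C z)) ⊆ C z' j)) →
    R.card + 2 ≤ ∑ z ∈ R, ((Finset.Icc 1 (n z)).filter (fun i => ∀ u ∈ R, u ∉ C z i)).card := by
  induction R using Finset.strongInductionOn with
  | _ R ih =>
  intro hR hn hnotmem hdisj hcases
  by_cases hocc : ∀ z ∈ R, ∀ i ∈ Finset.Icc 1 (n z), ∀ u ∈ R, u ∉ C z i
  · -- every piece is free
    have hsum : ∑ z ∈ R, ((Finset.Icc 1 (n z)).filter (fun i => ∀ u ∈ R, u ∉ C z i)).card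
        = ∑ z ∈ R, n z := by
      refine Finset.sum_congr rfl fun z hz => ?_
      rw [Finset.filter_true_of_mem (fun i hi => hocc z hz i hi), Nat.card_Icc]
      omega
    have h3 : R.card * 3 ≤ ∑ z ∈ R, n z := by
      simpa using Finset.card_nsmul_le_sum R n 3 hn
    have hpos : 0 < R.card := Finset.card_pos.mpr hR
    omega
  · push_neg at hocc
    obtain ⟨zw, hzw, iw, hiw, u0, hu0R, hu0mem⟩ := hocc
    -- the finset of occupied pieces, choose one of minimal cardinality
    set T : Finset (α × ℕ) := R.biUnion (fun z => ((Finset.Icc 1 (n z)).filter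
        (fun i => ∃ u ∈ R, u ∈ C z i)).image (fun i => (z, i))) with hT
    have hTne : T.Nonempty := ⟨(zw, iw), Finset.mem_biUnion.mpr ⟨zw, hzw,
        Finset.mem_image.mpr ⟨iw, Finset.mem_filter.mpr ⟨hiw, u0, hu0R, hu0mem⟩, rfl⟩⟩⟩
    obtain ⟨ps, hmemT, hmin⟩ := T.exists_min_image (fun p => (C p.1 p.2).card) hTne
    obtain ⟨zs, is⟩ := ps
    obtain ⟨zs', hzs', him⟩ := Finset.mem_biUnion.mp hmemT
    obtain ⟨is', hfil, heq⟩ := Finset.mem_image.mp him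
    rw [Prod.mk.injEq] at heq
    obtain ⟨rfl, rfl⟩ := heq
    have hzs : zs' ∈ R := hzs'
    obtain ⟨hiIcc, z₀, hz₀R, hz₀mem⟩ := Finset.mem_filter.mp hfil
    set zs := zs' with hzs_def
    have hz₀zs : z₀ ≠ zs := fun h => hnotmem zs hzs is' hiIcc (h ▸ hz₀mem)
    -- minimality: any piece of z₀ inside C zs is' is free
    have hminfree : ∀ k ∈ Finset.Icc 1 (n z₀), C z₀ k ⊆ C zs is' → ∀ u ∈ R, u ∉ C z₀ k := by
      intro k hk hsubk u huR humem
      have hmemk : (z₀, k) ∈ T := Finset.mem_biUnion.mpr ⟨z₀, hz₀R,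
        Finset.mem_image.mpr ⟨k, Finset.mem_filter.mpr ⟨hk, u, huR, humem⟩, rfl⟩⟩
      have hle := hmin _ hmemk
      have hsub' : C z₀ k ⊆ (C zs is').erase z₀ := fun x hx => Finset.mem_erase.mpr
        ⟨fun he => hnotmem z₀ hz₀R k hk (he ▸ hx), hsubk hx⟩
      have hcle := Finset.card_le_card hsub'
      rw [Finset.card_erase_of_mem hz₀mem] at hcle
      have hpos : 0 < (C zs is').card := Finset.card_pos.mpr ⟨z₀, hz₀mem⟩
      simp only at hle hcle
      omega
    -- all pieces of z₀ except at most one are free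
    have hstep3 : ∃ j', ∀ k ∈ Finset.Icc 1 (n z₀), k ≠ j' → ∀ u ∈ R, u ∉ C z₀ k := by
      rcases hcases zs hzs z₀ hz₀R (Ne.symm hz₀zs) with h | ⟨a, ha, b, hb, h1, h2⟩ | ⟨a, ha, h⟩ | ⟨b, hb, h⟩
      · exact absurd (Finset.mem_insert_self z₀ _)
          (Finset.disjoint_left.mp h (piece_subset_cone hiIcc hz₀mem))
      · have hz₀a : z₀ ∈ C zs a :=
          h1 (Finset.mem_sdiff.mpr ⟨Finset.mem_insert_self _ _, hnotmem z₀ hz₀R b hb⟩)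
        have hais : a = is' := index_eq (hdisj zs hzs) ha hiIcc hz₀a hz₀mem
        subst hais
        exact ⟨b, fun k hk hkb => hminfree k hk (fun x hx => h1 (Finset.mem_sdiff.mpr
          ⟨piece_subset_cone hk hx,
           Finset.disjoint_left.mp (hdisj z₀ hz₀R k hk b hb hkb) hx⟩))⟩
      · have hz₀a : z₀ ∈ C zs a := h (Finset.mem_insert_self _ _)
        have hais : a = is' := index_eq (hdisj zs hzs) ha hiIcc hz₀a hz₀mem
        subst hais
        exact ⟨0, fun k hk _ => hminfree k hk ((piece_subset_cone hk).trans h)⟩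
      · exact absurd (h (piece_subset_cone hiIcc hz₀mem)) (hnotmem z₀ hz₀R b hb)
    obtain ⟨j', hj'⟩ := hstep3
    have hfz₀ : 2 ≤ ((Finset.Icc 1 (n z₀)).filter (fun i => ∀ u ∈ R, u ∉ C z₀ i)).card := by
      have hsubf : (Finset.Icc 1 (n z₀)).erase j'
          ⊆ (Finset.Icc 1 (n z₀)).filter (fun i => ∀ u ∈ R, u ∉ C z₀ i) := by
        intro k hk
        rw [Finset.mem_erase] at hk
        exact Finset.mem_filter.mpr ⟨hk.2, hj' k hk.2 hk.1⟩
      have hc1 := Finset.card_le_card hsubf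
      have hc2 : (Finset.Icc 1 (n z₀)).card = n z₀ := by rw [Nat.card_Icc]; omega
      have hc3 := Finset.pred_card_le_card_erase (s := Finset.Icc 1 (n z₀)) (a := j')
      have hc4 := hn z₀ hz₀R
      omega
    set R' := R.erase z₀ with hR'def
    have hzsR' : zs ∈ R' := Finset.mem_erase.mpr ⟨Ne.symm hz₀zs, hzs⟩
    have hR'ss : R' ⊂ R := Finset.erase_ssubset hz₀R
    have hR'sub : R' ⊆ R := Finset.erase_subset _ _
    have IH := ih R' hR'ss ⟨zs, hzsR'⟩ (fun z hz => hn z (hR'sub hz))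
      (fun z hz => hnotmem z (hR'sub hz)) (fun z hz => hdisj z (hR'sub hz))
      (fun z hz z' hz' => hcases z (hR'sub hz) z' (hR'sub hz'))
    have hkey : ∀ w ∈ R',
        ((Finset.Icc 1 (n w)).filter (fun i => ∀ u ∈ R', u ∉ C w i)).card
        ≤ ((Finset.Icc 1 (n w)).filter (fun i => ∀ u ∈ R, u ∉ C w i)).card
          + ((Finset.Icc 1 (n w)).filter
              (fun i => z₀ ∈ C w i ∧ ∀ c ∈ R, c ∈ C w i → c = z₀)).card := by
      intro w hw
      have hsubu : (Finset.Icc 1 (n w)).filter (fun i => ∀ u ∈ R', u ∉ C w i)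
          ⊆ (Finset.Icc 1 (n w)).filter (fun i => ∀ u ∈ R, u ∉ C w i)
            ∪ (Finset.Icc 1 (n w)).filter
              (fun i => z₀ ∈ C w i ∧ ∀ c ∈ R, c ∈ C w i → c = z₀) := by
        intro k hk
        obtain ⟨hkIcc, hkfree⟩ := Finset.mem_filter.mp hk
        by_cases hz₀k : z₀ ∈ C w k
        · refine Finset.mem_union_right _ (Finset.mem_filter.mpr ⟨hkIcc, hz₀k, ?_⟩)
          intro c hcR hcmem
          by_contra hc
          exact hkfree c (Finset.mem_erase.mpr ⟨hc, hcR⟩) hcmem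
        · refine Finset.mem_union_left _ (Finset.mem_filter.mpr ⟨hkIcc, ?_⟩)
          intro u huR humem
          rcases eq_or_ne u z₀ with rfl | hne
          · exact hz₀k humem
          · exact hkfree u (Finset.mem_erase.mpr ⟨hne, huR⟩) humem
      exact (Finset.card_le_card hsubu).trans (Finset.card_union_le _ _)
    have heone : ∀ w ∈ R', ((Finset.Icc 1 (n w)).filter
        (fun i => z₀ ∈ C w i ∧ ∀ c ∈ R, c ∈ C w i → c = z₀)).card ≤ 1 := by
      intro w hw
      refine Finset.card_le_one.mpr (fun a ha b hb => ?_)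
      obtain ⟨haI, haz, -⟩ := Finset.mem_filter.mp ha
      obtain ⟨hbI, hbz, -⟩ := Finset.mem_filter.mp hb
      exact index_eq (hdisj w (hR'sub hw)) haI hbI haz hbz
    have hesum : ∑ w ∈ R', ((Finset.Icc 1 (n w)).filter
        (fun i => z₀ ∈ C w i ∧ ∀ c ∈ R, c ∈ C w i → c = z₀)).card ≤ 1 := by
      by_cases hex : ∃ w₁ ∈ R', ((Finset.Icc 1 (n w₁)).filter
          (fun i => z₀ ∈ C w₁ i ∧ ∀ c ∈ R, c ∈ C w₁ i → c = z₀)).Nonempty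
      · obtain ⟨w₁, hw₁, hne₁⟩ := hex
        have hzero : ∀ b ∈ R', b ≠ w₁ → ((Finset.Icc 1 (n b)).filter
            (fun i => z₀ ∈ C b i ∧ ∀ c ∈ R, c ∈ C b i → c = z₀)).card = 0 := by
          intro b hb hbw
          rw [Finset.card_eq_zero]
          by_contra hnonempty
          obtain ⟨p, hp⟩ := Finset.nonempty_of_ne_empty hnonempty
          obtain ⟨q, hq⟩ := hne₁
          obtain ⟨hpI, hpz, hppure⟩ := Finset.mem_filter.mp hp
          obtain ⟨hqI, hqz, hqpure⟩ := Finset.mem_filter.mp hq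
          exact atMostOneBad' hnotmem hdisj hcases (hR'sub hb) (hR'sub hw₁)
            (Finset.mem_erase.mp hb).1 (Finset.mem_erase.mp hw₁).1 hbw
            hpI hqI hpz hqz hppure hqpure
        rw [Finset.sum_eq_single_of_mem w₁ hw₁ hzero]
        exact heone w₁ hw₁
      · push_neg at hex
        have hzz : ∀ w ∈ R', ((Finset.Icc 1 (n w)).filter
            (fun i => z₀ ∈ C w i ∧ ∀ c ∈ R, c ∈ C w i → c = z₀)).card = 0 := by
          intro w hw
          rw [Finset.card_eq_zero]
          exact hex w hw
        rw [Finset.sum_congr rfl hzz]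
        simp
    have hsumR' : ∑ w ∈ R', ((Finset.Icc 1 (n w)).filter (fun i => ∀ u ∈ R', u ∉ C w i)).card
        ≤ ∑ w ∈ R', ((Finset.Icc 1 (n w)).filter (fun i => ∀ u ∈ R, u ∉ C w i)).card + 1 := by
      calc ∑ w ∈ R', ((Finset.Icc 1 (n w)).filter (fun i => ∀ u ∈ R', u ∉ C w i)).card
          ≤ ∑ w ∈ R', (((Finset.Icc 1 (n w)).filter (fun i => ∀ u ∈ R, u ∉ C w i)).card
            + ((Finset.Icc 1 (n w)).filter
                (fun i => z₀ ∈ C w i ∧ ∀ c ∈ R, c ∈ C w i → c = z₀)).card) :=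
            Finset.sum_le_sum hkey
        _ = ∑ w ∈ R', ((Finset.Icc 1 (n w)).filter (fun i => ∀ u ∈ R, u ∉ C w i)).card
            + ∑ w ∈ R', ((Finset.Icc 1 (n w)).filter
                (fun i => z₀ ∈ C w i ∧ ∀ c ∈ R, c ∈ C w i → c = z₀)).card :=
            Finset.sum_add_distrib
        _ ≤ _ := by omega
    have hsplit : ((Finset.Icc 1 (n z₀)).filter (fun i => ∀ u ∈ R, u ∉ C z₀ i)).card
        + ∑ w ∈ R', ((Finset.Icc 1 (n w)).filter (fun i => ∀ u ∈ R, u ∉ C w i)).card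
        = ∑ z ∈ R, ((Finset.Icc 1 (n z)).filter (fun i => ∀ u ∈ R, u ∉ C z i)).card :=
      Finset.add_sum_erase R (fun z => ((Finset.Icc 1 (n z)).filter (fun i => ∀ u ∈ R, u ∉ C z i)).card) hz₀R
    have hcards : R.card = R'.card + 1 := by
      rw [hR'def, Finset.card_erase_of_mem hz₀R]
      have hpos := Finset.card_pos.mpr hR
      omega
    omega

private lemma freeDisjoint {n : α → ℕ} {C : α → ℕ → Finset α} {R : Finset α}
    (hnotmem : ∀ z ∈ R, ∀ i ∈ Finset.Icc 1 (n z), z ∉ C z i)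
    (hdisj : ∀ z ∈ R, ∀ i ∈ Finset.Icc 1 (n z), ∀ j ∈ Finset.Icc 1 (n z), i ≠ j →
      Disjoint (C z i) (C z j))
    (hcases : ∀ z ∈ R, ∀ z' ∈ R, z ≠ z' →
      Disjoint (insert z ((Finset.Icc 1 (n z)).biUnion (C z)))
               (insert z' ((Finset.Icc 1 (n z')).biUnion (C z'))) ∨
      (∃ i ∈ Finset.Icc 1 (n z), ∃ j ∈ Finset.Icc 1 (n z'),
        insert z' ((Finset.Icc 1 (n z')).biUnion (C z')) \ C z' j ⊆ C z i ∧
        insert z ((Finset.Icc 1 (n z)).biUnion (C z)) \ C z i ⊆ C z' j) ∨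
      (∃ i ∈ Finset.Icc 1 (n z),
        insert z' ((Finset.Icc 1 (n z')).biUnion (C z')) ⊆ C z i) ∨
      (∃ j ∈ Finset.Icc 1 (n z'),
        insert z ((Finset.Icc 1 (n z)).biUnion (C z)) ⊆ C z' j))
    {z z' : α} (hz : z ∈ R) (hz' : z' ∈ R) (hzz : z ≠ z')
    {i i' : ℕ} (hi : i ∈ Finset.Icc 1 (n z)) (hi' : i' ∈ Finset.Icc 1 (n z'))
    (hfree : ∀ u ∈ R, u ∉ C z i) (hfree' : ∀ u ∈ R, u ∉ C z' i') :
    Disjoint (C z i) (C z' i') := by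
  rcases hcases z hz z' hz' hzz with h | ⟨a, ha, b, hb, h1, h2⟩ | ⟨a, ha, h⟩ | ⟨b, hb, h⟩
  · exact h.mono (piece_subset_cone hi) (piece_subset_cone hi')
  · have hz'a : z' ∈ C z a :=
      h1 (Finset.mem_sdiff.mpr ⟨Finset.mem_insert_self _ _, hnotmem z' hz' b hb⟩)
    have hia : i ≠ a := fun he => hfree z' hz' (he ▸ hz'a)
    have hsub1 : C z i ⊆ C z' b := fun x hx => h2 (Finset.mem_sdiff.mpr
      ⟨piece_subset_cone hi hx, Finset.disjoint_left.mp (hdisj z hz i hi a ha hia) hx⟩)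
    have hzb : z ∈ C z' b :=
      h2 (Finset.mem_sdiff.mpr ⟨Finset.mem_insert_self _ _, hnotmem z hz a ha⟩)
    have hib : i' ≠ b := fun he => hfree' z hz (he ▸ hzb)
    exact ((hdisj z' hz' i' hi' b hb hib).mono_right hsub1).symm
  · have hz'a : z' ∈ C z a := h (Finset.mem_insert_self _ _)
    have hia : i ≠ a := fun he => hfree z' hz' (he ▸ hz'a)
    exact (hdisj z hz i hi a ha hia).mono_right ((piece_subset_cone hi').trans h)
  · have hzb : z ∈ C z' b := h (Finset.mem_insert_self _ _)
    have hib : i' ≠ b := fun he => hfree' z hz (he ▸ hzb)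
    exact ((hdisj z' hz' i' hi' b hb hib).mono_right ((piece_subset_cone hi).trans h)).symm

end GKNAux

/-- The counting lemma of Gandolfi, Keane and Newman (Lemma 4.2 in [GKN92]).
`S` is a finite set, `R ⊆ S` non-empty, `K > 0`. For each `z ∈ R` there is a family
`C z 1, …, C z (n z)` (with `n z ≥ 3`) of pairwise disjoint non-empty subsets of `S`,
none containing `z`, each of cardinality at least `K`; and for all distinct `z, z' ∈ R`
one of the four compatibility cases (i)–(iv) holds (with `Cz = ⋃_{i=1}^{n z} C z i`).
Then `|S| ≥ K(|R| + 2)`. -/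
theorem statement4 {α : Type*} [DecidableEq α] (S R : Finset α) (hRS : R ⊆ S)
    (hR : R.Nonempty) (K : ℝ) (hK : 0 < K) (n : α → ℕ) (C : α → ℕ → Finset α)
    (hn : ∀ z ∈ R, 3 ≤ n z)
    (hsub : ∀ z ∈ R, ∀ i ∈ Finset.Icc 1 (n z), C z i ⊆ S)
    (hne : ∀ z ∈ R, ∀ i ∈ Finset.Icc 1 (n z), (C z i).Nonempty)
    (hnotmem : ∀ z ∈ R, ∀ i ∈ Finset.Icc 1 (n z), z ∉ C z i)
    (hcard : ∀ z ∈ R, ∀ i ∈ Finset.Icc 1 (n z), K ≤ ((C z i).card : ℝ))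
    (hdisj : ∀ z ∈ R, ∀ i ∈ Finset.Icc 1 (n z), ∀ j ∈ Finset.Icc 1 (n z), i ≠ j →
      Disjoint (C z i) (C z j))
    (hcases : ∀ z ∈ R, ∀ z' ∈ R, z ≠ z' →
      Disjoint (insert z ((Finset.Icc 1 (n z)).biUnion (C z)))
               (insert z' ((Finset.Icc 1 (n z')).biUnion (C z'))) ∨
      (∃ i ∈ Finset.Icc 1 (n z), ∃ j ∈ Finset.Icc 1 (n z'),
        insert z' ((Finset.Icc 1 (n z')).biUnion (C z')) \ C z' j ⊆ C z i ∧
        insert z ((Finset.Icc 1 (n z)).biUnion (C z)) \ C z i ⊆ C z' j) ∨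
      (∃ i ∈ Finset.Icc 1 (n z),
        insert z' ((Finset.Icc 1 (n z')).biUnion (C z')) ⊆ C z i) ∨
      (∃ j ∈ Finset.Icc 1 (n z'),
        insert z ((Finset.Icc 1 (n z)).biUnion (C z)) ⊆ C z' j)) :
    K * ((R.card : ℝ) + 2) ≤ (S.card : ℝ) := by
  have hfree := freeCount n C R hR hn hnotmem hdisj hcases
  set F : α → Finset ℕ := fun z => (Finset.Icc 1 (n z)).filter (fun i => ∀ u ∈ R, u ∉ C z i) with hF
  set U : α → Finset α := fun z => (F z).biUnion (C z) with hU
  have hUS : ∀ z ∈ R, U z ⊆ S := fun z hz => Finset.biUnion_subset.mpr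
    (fun i hi => hsub z hz i (Finset.mem_filter.mp hi).1)
  have hUd : ∀ z ∈ R, ∀ z' ∈ R, z ≠ z' → Disjoint (U z) (U z') := by
    intro z hz z' hz' hzz
    rw [hU]
    simp only
    rw [Finset.disjoint_biUnion_left]
    intro i hi
    rw [Finset.disjoint_biUnion_right]
    intro i' hi'
    exact freeDisjoint hnotmem hdisj hcases hz hz' hzz
      (Finset.mem_filter.mp hi).1 (Finset.mem_filter.mp hi').1
      (Finset.mem_filter.mp hi).2 (Finset.mem_filter.mp hi').2
  have hcardU : ∀ z ∈ R, K * ((F z).card : ℝ) ≤ ((U z).card : ℝ) := by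
    intro z hz
    have h1 : (U z).card = ∑ i ∈ F z, (C z i).card :=
      Finset.card_biUnion (fun i hi j hj hij =>
        hdisj z hz i (Finset.mem_filter.mp hi).1 j (Finset.mem_filter.mp hj).1 hij)
    rw [h1]
    push_cast
    calc K * ((F z).card : ℝ) = ∑ _i ∈ F z, K := by
          rw [Finset.sum_const, nsmul_eq_mul, mul_comm]
      _ ≤ ∑ i ∈ F z, ((C z i).card : ℝ) :=
          Finset.sum_le_sum (fun i hi => hcard z hz i (Finset.mem_filter.mp hi).1)
  have htot : ∑ z ∈ R, ((U z).card : ℝ) ≤ (S.card : ℝ) := by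
    have h1 : (R.biUnion U).card = ∑ z ∈ R, (U z).card := Finset.card_biUnion hUd
    have h2 := Finset.card_le_card (Finset.biUnion_subset.mpr hUS)
    rw [h1] at h2
    exact_mod_cast h2
  calc K * ((R.card : ℝ) + 2) ≤ K * (∑ z ∈ R, ((F z).card : ℝ)) := by
        apply mul_le_mul_of_nonneg_left _ hK.le
        have h3 : ((R.card + 2 : ℕ) : ℝ) ≤ ((∑ z ∈ R, (F z).card : ℕ) : ℝ) := by
          exact_mod_cast hfree
        push_cast at h3
        convert h3 using 2
    _ = ∑ z ∈ R, K * ((F z).card : ℝ) := Finset.mul_sum _ _ _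
    _ ≤ ∑ z ∈ R, ((U z).card : ℝ) := Finset.sum_le_sum hcardU
    _ ≤ (S.card : ℝ) := htot
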